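/- Let A : ℝ → Matrix (Fin 2) (Fin 2) ℝ, let λ̃ : ℝ → ℝ and θ : ℝ → ℝ be differentiable with λ̃(t) ≠ 0 for all t, and define λ : ℝ → ℝ² by λ(t) = −λ̃(t)·(cos θ(t), sin θ(t)). If λ satisfies the costate equation λ'(t) = −A(t)ᵀ λ(t) for all t, then θ satisfies θ'(t) = −⟨(−sin θ(t), cos θ(t)), A(t)ᵀ (cos θ(t), sin θ(t))⟩ for all t. -/

import Mathlib

open Matrix

/-- If the costate `λ(t) = −λ̃(t)·(cos θ(t), sin θ(t))` (with `λ̃(t) ≠ 0`,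
`λ̃` and `θ` differentiable) satisfies the costate equation `λ' = −A(t)ᵀ λ`, then the
control angle satisfies `θ' = −⟨(−sin θ, cos θ), A(t)ᵀ (cos θ, sin θ)⟩`. -/
theorem stmt6 (A : ℝ → Matrix (Fin 2) (Fin 2) ℝ) (lam θ : ℝ → ℝ)
    (hlam : Differentiable ℝ lam) (hθ : Differentiable ℝ θ)
    (hne : ∀ t, lam t ≠ 0)
    (l : ℝ → (Fin 2 → ℝ))
    (hl : ∀ t, l t = -(lam t) • ![Real.cos (θ t), Real.sin (θ t)])
    (hode : ∀ t, deriv l t = -(Matrix.mulVec (A t)ᵀ (l t))) :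
    ∀ t, deriv θ t =
      -(dotProduct ![-(Real.sin (θ t)), Real.cos (θ t)]
        (Matrix.mulVec (A t)ᵀ ![Real.cos (θ t), Real.sin (θ t)])) := by
  intro t
  have hlamt : HasDerivAt lam (deriv lam t) t := (hlam t).hasDerivAt
  have hθt : HasDerivAt θ (deriv θ t) t := (hθ t).hasDerivAt
  have hc : HasDerivAt (fun s => Real.cos (θ s)) (-Real.sin (θ t) * deriv θ t) t := hθt.cos
  have hs : HasDerivAt (fun s => Real.sin (θ s)) (Real.cos (θ t) * deriv θ t) t := hθt.sin
  have h0 : HasDerivAt (fun s => -(lam s) * Real.cos (θ s))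
      (-(deriv lam t) * Real.cos (θ t) + -(lam t) * (-Real.sin (θ t) * deriv θ t)) t :=
    hlamt.neg.mul hc
  have h1 : HasDerivAt (fun s => -(lam s) * Real.sin (θ s))
      (-(deriv lam t) * Real.sin (θ t) + -(lam t) * (Real.cos (θ t) * deriv θ t)) t :=
    hlamt.neg.mul hs
  have hL : HasDerivAt l
      (![(-(deriv lam t) * Real.cos (θ t) + -(lam t) * (-Real.sin (θ t) * deriv θ t)),
         (-(deriv lam t) * Real.sin (θ t) + -(lam t) * (Real.cos (θ t) * deriv θ t))]) t := by
    rw [hasDerivAt_pi]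
    intro i
    fin_cases i
    · simpa [hl] using h0
    · simpa [hl] using h1
  have hderiv := hL.deriv
  have heq := hode t
  rw [hderiv, hl t] at heq
  set c := Real.cos (θ t)
  set s := Real.sin (θ t)
  have e0 := congrFun heq 0
  have e1 := congrFun heq 1
  simp only [Matrix.mulVec_smul, Matrix.cons_val_zero, Matrix.cons_val_one, Matrix.head_cons,
    Pi.neg_apply, Pi.smul_apply, smul_eq_mul, neg_mul, neg_neg] at e0 e1
  have hpyth : s ^ 2 + c ^ 2 = 1 := Real.sin_sq_add_cos_sq (θ t)
  have hlne := hne t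
  set m0 := ((A t)ᵀ.mulVec ![c, s]) 0
  set m1 := ((A t)ᵀ.mulVec ![c, s]) 1
  simp only [dotProduct, Fin.sum_univ_two, Matrix.cons_val_zero, Matrix.cons_val_one,
    Matrix.head_cons]
  -- goal: deriv θ t = -(-s * m0 + c * m1)
  have key : lam t * deriv θ t = lam t * (s * m0 - c * m1) := by linear_combination s * e0 - c * e1 - lam t * deriv θ t * hpyth
  have := mul_left_cancel₀ hlne key
  linarith
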